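/- Let $(R,\mathfrak{m})$ be a Noetherian local ring and $I = (f_1,\dots,f_p)$ with $f_1,\dots,f_p$ a regular sequence in $\mathfrak{m}$, $p \ge 2$. Set $f = f_1$ and $K = (f_2,\dots,f_p)$. Then for every $r \ge 1$, $f I^{r-1} \cap K^r = f K^r$. -/

import Mathlib

open RingTheory.Sequence IsLocalRing

lemma sup_pow_succ_le {R : Type*} [CommRing R] (A B : Ideal R) (n : ℕ) :
    (A ⊔ B) ^ (n + 1) ≤ A * (A ⊔ B) ^ n ⊔ B ^ (n + 1) := by
  induction n with
  | zero => rw [pow_one, pow_zero, mul_one, pow_one]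
  | succ n ih =>
    have h1 : (A ⊔ B) ^ (n + 2) = A * (A ⊔ B) ^ (n + 1) + B * (A ⊔ B) ^ (n + 1) := by
      rw [← add_mul, Ideal.add_eq_sup, ← pow_succ']
    have h2 : B * (A ⊔ B) ^ (n + 1) ≤ B * (A * (A ⊔ B) ^ n ⊔ B ^ (n + 1)) :=
      Ideal.mul_mono_right ih
    have h3 : B * (A * (A ⊔ B) ^ n ⊔ B ^ (n + 1)) =
        A * (B * (A ⊔ B) ^ n) + B ^ (n + 2) := by
      rw [← Ideal.add_eq_sup, mul_add]; ring
    have h4 : A * (B * (A ⊔ B) ^ n) ≤ A * (A ⊔ B) ^ (n + 1) := by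
      refine Ideal.mul_mono_right ?_
      rw [pow_succ']
      exact Ideal.mul_mono_left le_sup_right
    rw [h1, Ideal.add_eq_sup]
    refine sup_le le_sup_left ((h2.trans h3.le).trans ?_)
    rw [Ideal.add_eq_sup]
    exact sup_le (h4.trans le_sup_left) le_sup_right

lemma key {R : Type*} [CommRing R] [IsNoetherianRing R] [IsLocalRing R] :
    ∀ (gs hs : List R) (f : R),
      (∀ x ∈ hs ++ gs ++ [f], x ∈ maximalIdeal R) →
      IsWeaklyRegular R (hs ++ gs ++ [f]) →
      ∀ (r : ℕ) (y : R), f * y ∈ Ideal.ofList gs ^ r ⊔ Ideal.ofList hs →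
        y ∈ Ideal.ofList gs ^ r ⊔ Ideal.ofList hs := by
  intro gs
  induction gs with
  | nil =>
    intro hs f hm hwr r y hy
    rcases r with _ | n
    · simpa using Submodule.mem_top
    · rw [Ideal.ofList_nil, ← Ideal.zero_eq_bot, zero_pow (Nat.succ_ne_zero n), Ideal.zero_eq_bot,
        bot_sup_eq] at hy ⊢
      rw [List.append_nil] at hwr
      rw [isWeaklyRegular_append_iff, isWeaklyRegular_singleton_iff,
        isSMulRegular_quotient_iff_mem_of_smul_mem] at hwr
      have := hwr.2 y (by rw [smul_eq_mul, Ideal.mul_top]; exact hy)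
      rwa [smul_eq_mul, Ideal.mul_top] at this
  | cons g gs' ih =>
    intro hs f hm hwr r
    induction r with
    | zero => intro y _; simp
    | succ n ihr =>
      intro y hy
      set K' : Ideal R := Ideal.ofList gs' with hK'
      set K : Ideal R := Ideal.ofList (g :: gs') with hK
      set H : Ideal R := Ideal.ofList hs with hH
      have hKdef : K = Ideal.span {g} ⊔ K' := Ideal.ofList_cons g gs'
      have hK'K : K' ≤ K := hKdef ▸ le_sup_right
      have hgK : g ∈ K := hKdef ▸ Submodule.mem_sup_left (Ideal.mem_span_singleton_self g)
      -- Step 1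
      have hmem1 : ∀ x ∈ (hs ++ [g]) ++ gs' ++ [f], x ∈ maximalIdeal R := by
        intro x hx; apply hm
        simp only [List.mem_append, List.mem_cons, List.mem_singleton] at hx ⊢; tauto
      have hwr1 : IsWeaklyRegular R ((hs ++ [g]) ++ gs' ++ [f]) := by
        refine IsLocalRing.isWeaklyRegular_of_perm_of_subset_maximalIdeal hwr
          (List.Perm.append_right _ ?_) (by intro x hx; apply hm; simpa using hx)
        simp [List.append_assoc]
      have hle1 : K ^ (n + 1) ⊔ H ≤ K' ^ (n + 1) ⊔ Ideal.ofList (hs ++ [g]) := by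
        rw [Ideal.ofList_append, Ideal.ofList_singleton]
        refine sup_le ?_ (le_sup_right.trans' le_sup_left)
        rw [hKdef]
        refine (sup_pow_succ_le _ _ n).trans (sup_le ?_ le_sup_left)
        exact Ideal.mul_le_left.trans (le_sup_right.trans' le_sup_right)
      have hy1 : y ∈ K' ^ (n + 1) ⊔ Ideal.ofList (hs ++ [g]) :=
        ih (hs ++ [g]) f hmem1 hwr1 (n + 1) y (hle1 hy)
      rw [Ideal.ofList_append, Ideal.ofList_singleton, ← sup_assoc] at hy1
      obtain ⟨u, hu, t, ht, huty⟩ := Submodule.mem_sup.mp hy1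
      obtain ⟨w, hwt⟩ := Ideal.mem_span_singleton'.mp ht
      -- hu : u ∈ K'^(n+1) ⊔ H, hwt : w * g = t, huty : u + t = y
      -- Step 2 : g * (f * w) ∈ K^(n+1) ⊔ H
      have hu' : u ∈ K ^ (n + 1) ⊔ H :=
        sup_le_sup_right (Ideal.pow_right_mono hK'K _) H hu
      have hfu : f * u ∈ K ^ (n + 1) ⊔ H := Ideal.mul_mem_left _ f hu'
      have hgfw : g * (f * w) ∈ K ^ (n + 1) ⊔ H := by
        have : g * (f * w) = f * y - f * u := by rw [← huty, ← hwt]; ring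
        rw [this]; exact sub_mem hy hfu
      -- Step 3 : f * w ∈ K^n ⊔ H
      have hle3 : K ^ (n + 1) ⊔ H ≤ Ideal.span {g} * K ^ n ⊔ (K' ^ (n + 1) ⊔ H) := by
        refine sup_le ?_ (le_sup_right.trans' le_sup_right)
        calc K ^ (n + 1) ≤ Ideal.span {g} * (Ideal.span {g} ⊔ K') ^ n ⊔ K' ^ (n + 1) := by
              rw [hKdef]; exact sup_pow_succ_le _ _ n
          _ ≤ _ := sup_le (le_sup_left.trans' (by rw [hKdef])) (le_sup_right.trans' le_sup_left)
      obtain ⟨t', ht', d, hd, htd⟩ := Submodule.mem_sup.mp (hle3 hgfw)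
      obtain ⟨c, hc, hgc⟩ := Ideal.mem_span_singleton_mul.mp ht'
      have hmem3 : ∀ x ∈ hs ++ gs' ++ [g], x ∈ maximalIdeal R := by
        intro x hx; apply hm
        simp only [List.mem_append, List.mem_cons, List.mem_singleton] at hx ⊢; tauto
      have hwr3 : IsWeaklyRegular R (hs ++ gs' ++ [g]) := by
        have hpre : IsWeaklyRegular R (hs ++ (g :: gs')) :=
          ((isWeaklyRegular_append_iff R _ _).mp
            (by rwa [List.append_assoc] at hwr)).1
        refine IsLocalRing.isWeaklyRegular_of_perm_of_subset_maximalIdeal hpre ?_ ?_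
        · rw [List.append_assoc]
          exact List.Perm.append_left hs (List.perm_append_singleton g gs').symm
        · intro x hx; apply hm
          simp only [List.mem_append, List.mem_cons, List.mem_singleton] at hx ⊢; tauto
      have hfwc : f * w - c ∈ K' ^ (n + 1) ⊔ H := by
        refine ih hs g hmem3 hwr3 (n + 1) _ ?_
        have : g * (f * w - c) = d := by rw [mul_sub, hgc, ← htd]; ring
        rw [this]; exact hd
      have hfw : f * w ∈ K ^ n ⊔ H := by
        have h1 : f * w = c + (f * w - c) := by ring
        rw [h1]
        refine add_mem (Submodule.mem_sup_left hc) ?_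
        exact (sup_le_sup_right ((Ideal.pow_right_mono hK'K _).trans
            (Ideal.pow_le_pow_right (Nat.le_succ n))) H) hfwc
      -- Step 4
      have hw : w ∈ K ^ n ⊔ H := ihr w hfw
      -- Step 5
      obtain ⟨k, hk, h', hh', hkh⟩ := Submodule.mem_sup.mp hw
      have : y = u + (k * g + h' * g) := by rw [← huty, ← hwt, ← hkh]; ring
      rw [this]
      refine add_mem hu' (add_mem ?_ ?_)
      · refine Submodule.mem_sup_left ?_
        have := Ideal.mul_mem_mul hk hgK
        rwa [← pow_succ] at this
      · exact Submodule.mem_sup_right (Ideal.mul_mem_right g H hh')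


/-- Let `(R, 𝔪)` be a Noetherian local ring and `I = (f_1, …, f_p)` with `f_1, …, f_p` a
regular sequence in `𝔪`, `p ≥ 2`.  With `f = f_1` and `K = (f_2, …, f_p)`, for every `r ≥ 1`
one has `f I^(r-1) ∩ K^r = f K^r`. -/
theorem regular_sequence_inter {R : Type*} [CommRing R] [IsNoetherianRing R] [IsLocalRing R]
    {p : ℕ} (hp : 2 ≤ p) (f : Fin p → R)
    (hmem : ∀ i, f i ∈ IsLocalRing.maximalIdeal R)
    (hreg : RingTheory.Sequence.IsRegular R (List.ofFn f)) (r : ℕ) (hr : 1 ≤ r) :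
    Ideal.span {f ⟨0, by omega⟩} * (Ideal.span (Set.range f)) ^ (r - 1)
        ⊓ (Ideal.span (f '' {i : Fin p | (i : ℕ) ≠ 0})) ^ r
      = Ideal.span {f ⟨0, by omega⟩} * (Ideal.span (f '' {i : Fin p | (i : ℕ) ≠ 0})) ^ r := by
  obtain ⟨p', rfl⟩ : ∃ p', p = p' + 1 := ⟨p - 1, by omega⟩
  set f0 : R := f ⟨0, by omega⟩ with hf0
  have hf00 : f0 = f 0 := rfl
  set gs : List R := List.ofFn (fun i : Fin p' => f i.succ) with hgs
  have hset : {r : R | r ∈ gs} = f '' {i : Fin (p' + 1) | (i : ℕ) ≠ 0} := by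
    ext x
    simp only [hgs, Set.mem_setOf_eq, List.mem_ofFn, Set.mem_range, Set.mem_image]
    constructor
    · rintro ⟨j, rfl⟩
      exact ⟨j.succ, by simp [Fin.val_succ], rfl⟩
    · rintro ⟨i, hi, rfl⟩
      rcases Fin.eq_zero_or_eq_succ i with rfl | ⟨j, rfl⟩
      · simp at hi
      · exact ⟨j, rfl⟩
  have hofList : Ideal.ofList gs = Ideal.span (f '' {i : Fin (p' + 1) | (i : ℕ) ≠ 0}) :=
    congrArg Ideal.span hset
  set K : Ideal R := Ideal.span (f '' {i : Fin (p' + 1) | (i : ℕ) ≠ 0}) with hK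
  set I : Ideal R := Ideal.span (Set.range f) with hI
  have hKI : K ≤ I := Ideal.span_mono (Set.image_subset_range f _)
  have hwr : RingTheory.Sequence.IsWeaklyRegular R ([] ++ gs ++ [f0]) := by
    have hperm : (List.ofFn f).Perm ([] ++ gs ++ [f0]) := by
      rw [List.ofFn_succ, List.nil_append]
      exact (List.perm_append_singleton f0 gs).symm
    exact IsLocalRing.isWeaklyRegular_of_perm_of_subset_maximalIdeal
      hreg.toIsWeaklyRegular hperm (by
        intro x hx
        obtain ⟨i, rfl⟩ := List.mem_ofFn.mp hx
        exact hmem i)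
  have hmem' : ∀ x ∈ [] ++ gs ++ [f0], x ∈ IsLocalRing.maximalIdeal R := by
    intro x hx
    simp only [List.nil_append, List.mem_append, List.mem_singleton, hgs, List.mem_ofFn, Set.mem_range] at hx
    rcases hx with ⟨i, rfl⟩ | rfl
    · exact hmem _
    · exact hmem _
  refine le_antisymm ?_ ?_
  · rintro x ⟨hx1, hx2⟩
    obtain ⟨y, hy, hxy⟩ := Ideal.mem_span_singleton_mul.mp hx1
    have hy' : y ∈ K ^ r := by
      have := key gs [] f0 hmem' hwr r y (by
        rw [Ideal.ofList_nil, sup_bot_eq, hofList]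
        rw [hxy]; exact hx2)
      rwa [Ideal.ofList_nil, sup_bot_eq, hofList] at this
    rw [← hxy]
    exact Ideal.mul_mem_mul (Ideal.mem_span_singleton_self f0) hy'
  · refine le_inf ?_ Ideal.mul_le_right
    refine Ideal.mul_mono_right ?_
    calc K ^ r ≤ I ^ r := Ideal.pow_right_mono hKI r
      _ ≤ I ^ (r - 1) := Ideal.pow_le_pow_right (by omega)
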